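/- Let λ be a partition of n and (w1, w2) a complementary pair of words corresponding to λ, and let μ = λ* be the conjugate partition. Every column of the Specht matrix is nonzero, and there exist two distinct rearrangements r ≠ r' in R(w2) whose columns v_r and v_{r'} are ℂ-linearly dependent (equivalently, the Specht matroid M(λ) has a two-element circuit) if and only if μ_i = μ_{i+1} for some i with 1 ≤ i < λ_1, i.e., if and only if the diagram of λ has two columns of the same size. -/

import Mathlib

/-- The action of a permutation on a word: `σ · w = w ∘ σ⁻¹`. -/
def wact {n : ℕ} (σ : Equiv.Perm (Fin n)) (w : Fin n → ℕ) : Fin n → ℕ :=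
  w ∘ σ.symm

/-- `r` is a rearrangement of `w`. -/
def IsRearr {n : ℕ} (w r : Fin n → ℕ) : Prop :=
  ∃ σ : Equiv.Perm (Fin n), wact σ w = r

/-- The type of rearrangements of a word `w`. -/
abbrev Rearr {n : ℕ} (w : Fin n → ℕ) : Type :=
  {r : Fin n → ℕ // IsRearr w r}

theorem wact_wact {n : ℕ} (σ τ : Equiv.Perm (Fin n)) (w : Fin n → ℕ) :
    wact σ (wact τ w) = wact (σ * τ) w := rfl

/-- The action of a permutation on the type of rearrangements of `w`. -/
def ract {n : ℕ} {w : Fin n → ℕ} (σ : Equiv.Perm (Fin n)) (r : Rearr w) : Rearr w :=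
  ⟨wact σ r.1, by
    obtain ⟨τ, hτ⟩ := r.2
    exact ⟨σ * τ, by rw [← hτ, wact_wact]⟩⟩

instance {n : ℕ} (w : Fin n → ℕ) : Finite (Rearr w) :=
  Finite.of_surjective (fun σ : Equiv.Perm (Fin n) => (⟨wact σ w, σ, rfl⟩ : Rearr w))
    (fun r => by obtain ⟨r, σ, hσ⟩ := r; exact ⟨σ, Subtype.ext hσ⟩)

noncomputable instance {n : ℕ} (w : Fin n → ℕ) : Fintype (Rearr w) :=
  Fintype.ofFinite _

/-- Young's character `Y(r1, r2) = Σ sign σ` over all `σ` with `σ·w1 = r1` and `σ·w2 = r2`. -/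
def youngChar {n : ℕ} (w1 w2 : Fin n → ℕ) (r1 r2 : Fin n → ℕ) : ℤ :=
  ∑ σ : Equiv.Perm (Fin n),
    if wact σ w1 = r1 ∧ wact σ w2 = r2 then (Equiv.Perm.sign σ : ℤ) else 0

/-- A pair of words has trivial (diagonal) stabilizer. -/
def FreePair {n : ℕ} (p : (Fin n → ℕ) × (Fin n → ℕ)) : Prop :=
  ∀ σ : Equiv.Perm (Fin n), wact σ p.1 = p.1 → wact σ p.2 = p.2 → σ = 1

/-- The diagonal action on `R(w1) × R(w2)` has exactly one free orbit. -/
def HaveComplRearr {n : ℕ} (w1 w2 : Fin n → ℕ) : Prop :=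
  (∃ p : (Fin n → ℕ) × (Fin n → ℕ), IsRearr w1 p.1 ∧ IsRearr w2 p.2 ∧ FreePair p) ∧
  ∀ p q : (Fin n → ℕ) × (Fin n → ℕ),
    IsRearr w1 p.1 → IsRearr w2 p.2 → FreePair p →
    IsRearr w1 q.1 → IsRearr w2 q.2 → FreePair q →
    ∃ σ : Equiv.Perm (Fin n), wact σ p.1 = q.1 ∧ wact σ p.2 = q.2

/-- `w1, w2` are complementary: there is a unique free orbit and `(w1, w2)` lies in it. -/
def Complementary {n : ℕ} (w1 w2 : Fin n → ℕ) : Prop :=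
  HaveComplRearr w1 w2 ∧ FreePair (w1, w2)

/-- A column of the Specht matrix, as a complex vector indexed by `R(w1)`. -/
noncomputable def spechtCol {n : ℕ} (w1 w2 : Fin n → ℕ) (r2 : Rearr w2) : Rearr w1 → ℂ :=
  fun r1 => (youngChar w1 w2 r1.1 r2.1 : ℂ)

/-- The Specht module: the span of the columns of the Specht matrix. -/
noncomputable def SpechtModule {n : ℕ} (w1 w2 : Fin n → ℕ) : Submodule ℂ (Rearr w1 → ℂ) :=
  Submodule.span ℂ (Set.range (spechtCol w1 w2))

/-- A column of the real Specht matrix. -/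
noncomputable def spechtColR {n : ℕ} (w1 w2 : Fin n → ℕ) (r2 : Rearr w2) : Rearr w1 → ℝ :=
  fun r1 => (youngChar w1 w2 r1.1 r2.1 : ℝ)

/-- The Specht polytope: the convex hull of the columns of the real Specht matrix. -/
noncomputable def SpechtPolytope {n : ℕ} (w1 w2 : Fin n → ℕ) : Set (Rearr w1 → ℝ) :=
  convexHull ℝ (Set.range (spechtColR w1 w2))

/-- The `S_n`-action on complex-valued functions on `R(w)`: `(σ·f)(r) = f(σ⁻¹·r)`. -/
def factC {n : ℕ} {w : Fin n → ℕ} (σ : Equiv.Perm (Fin n)) (f : Rearr w → ℂ) :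
    Rearr w → ℂ :=
  fun r => f (ract σ⁻¹ r)

/-- A weakly decreasing list of positive integers (a partition shape). -/
def SortedPartList (l : List ℕ) : Prop :=
  l.Pairwise (· ≥ ·) ∧ ∀ x ∈ l, 0 < x

/-- The multiset of letter multiplicities of a word. -/
def multMultiset {n : ℕ} (w : Fin n → ℕ) : Multiset ℕ :=
  (Finset.image w Finset.univ).val.map
    (fun v => (Finset.univ.filter (fun i => w i = v)).card)

/-- The decreasingly sorted letter multiplicities of `w` are given by the list `l`. -/
def HasMultiplicities {n : ℕ} (w : Fin n → ℕ) (l : List ℕ) : Prop :=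
  SortedPartList l ∧ (l : Multiset ℕ) = multMultiset w

/-- The conjugate partition, as a list: `λ*_i = #{k : λ_k ≥ i}`. -/
def conjList (l : List ℕ) : List ℕ :=
  (List.range (l.getD 0 0)).map (fun j => (l.filter (fun x => j + 1 ≤ x)).length)

/-- The complementary pair `(w1, w2)` corresponds to the partition `l`. -/
def CorrespondsTo {n : ℕ} (w1 w2 : Fin n → ℕ) (l : List ℕ) : Prop :=
  HasMultiplicities w1 l ∧ HasMultiplicities w2 (conjList l)

namespace SpechtAux

variable {n : ℕ}

lemma wact_one (w : Fin n → ℕ) : wact 1 w = w := rfl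

lemma pair_inj {w1 w2 : Fin n → ℕ} (hf : FreePair (w1, w2)) :
    ∀ p q : Fin n, w1 p = w1 q → w2 p = w2 q → p = q := by
  intro p q h1 h2
  by_contra hne
  have hw : ∀ (w : Fin n → ℕ), w p = w q → wact (Equiv.swap p q) w = w := by
    intro w hw
    funext r
    simp only [wact, Function.comp_apply, Equiv.symm_swap]
    rcases eq_or_ne r p with rfl | hp
    · rw [Equiv.swap_apply_left]; exact hw.symm
    rcases eq_or_ne r q with rfl | hq
    · rw [Equiv.swap_apply_right]; exact hw
    · rw [Equiv.swap_apply_of_ne_of_ne hp hq]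
  have := hf (Equiv.swap p q) (hw w1 h1) (hw w2 h2)
  have : Equiv.swap p q p = p := by rw [this]; rfl
  rw [Equiv.swap_apply_left] at this
  exact hne this.symm

lemma young_val {w1 w2 : Fin n → ℕ} (hf : FreePair (w1, w2)) (σ : Equiv.Perm (Fin n)) :
    youngChar w1 w2 (wact σ w1) (wact σ w2) = (Equiv.Perm.sign σ : ℤ) := by
  unfold youngChar
  rw [Finset.sum_eq_single_of_mem σ (Finset.mem_univ σ)]
  · simp
  · intro τ _ hτ
    rw [if_neg]
    rintro ⟨h1, h2⟩
    have e1 : wact (σ⁻¹ * τ) w1 = w1 := by rw [← wact_wact, h1, wact_wact, inv_mul_cancel, wact_one]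
    have e2 : wact (σ⁻¹ * τ) w2 = w2 := by rw [← wact_wact, h2, wact_wact, inv_mul_cancel, wact_one]
    have := hf _ e1 e2
    exact hτ (by rwa [inv_mul_eq_one, eq_comm] at this)

lemma young_ne_zero {w1 w2 : Fin n → ℕ} (hf : FreePair (w1, w2)) (u r2 : Fin n → ℕ) :
    youngChar w1 w2 u r2 ≠ 0 ↔ ∃ σ, wact σ w1 = u ∧ wact σ w2 = r2 := by
  constructor
  · intro h
    by_contra hn
    push_neg at hn
    apply h
    unfold youngChar
    apply Finset.sum_eq_zero
    intro σ _
    rw [if_neg]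
    rintro ⟨a, b⟩
    exact hn σ a b
  · rintro ⟨σ, h1, h2⟩
    rw [← h1, ← h2, young_val hf σ]
    simp

lemma young_swap {w1 w2 : Fin n → ℕ} (τ : Equiv.Perm (Fin n)) (s : Equiv.Perm ℕ)
    (hτ1 : wact τ w1 = w1) (hτ2 : wact τ w2 = fun p => s (w2 p)) (u : Fin n → ℕ) :
    youngChar w1 w2 u (fun p => s (w2 p)) = (Equiv.Perm.sign τ : ℤ) * youngChar w1 w2 u w2 := by
  unfold youngChar
  rw [Finset.mul_sum,
    ← Equiv.sum_comp (Equiv.mulRight τ)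
      (fun σ => if wact σ w1 = u ∧ wact σ w2 = (fun p => s (w2 p)) then (Equiv.Perm.sign σ : ℤ) else 0)]
  apply Finset.sum_congr rfl
  intro σ _
  simp only [Equiv.coe_mulRight]
  have h1 : wact (σ * τ) w1 = wact σ w1 := by rw [← wact_wact, hτ1]
  have h2 : (wact (σ * τ) w2 = fun p => s (w2 p)) ↔ wact σ w2 = w2 := by
    rw [← wact_wact, hτ2]
    constructor
    · intro h
      funext p
      have := congrFun h p
      simp only [wact, Function.comp_apply] at this ⊢
      exact s.injective this
    · intro h
      funext p
      simp only [wact, Function.comp_apply] at h ⊢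
      exact congrArg s (congrFun h p)
  simp only [h1]
  by_cases hcond : wact σ w1 = u ∧ wact σ w2 = w2
  · rw [if_pos ⟨hcond.1, h2.mpr hcond.2⟩, if_pos hcond, Equiv.Perm.sign_mul]
    push_cast
    ring
  · rw [if_neg, if_neg hcond, mul_zero]
    rintro ⟨a, b⟩
    exact hcond ⟨a, h2.mp b⟩

/-- count of parts of `l` that are `≥ t+1` -/
def cge (l : List ℕ) (t : ℕ) : ℕ := Multiset.countP (fun x => t + 1 ≤ x) (l : Multiset ℕ)

lemma cge_antitone (l : List ℕ) : Antitone (cge l) := by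
  intro t t' h
  unfold cge
  rw [Multiset.countP_eq_card_filter, Multiset.countP_eq_card_filter]
  apply Multiset.card_le_card
  apply Multiset.monotone_filter_right
  intro x hx
  omega

lemma conjList_coe (l : List ℕ) :
    ((conjList l : List ℕ) : Multiset ℕ)
      = Multiset.map (cge l) (Finset.range (l.getD 0 0)).val := by
  have : (Finset.range (l.getD 0 0)).val = (List.range (l.getD 0 0) : Multiset ℕ) := rfl
  rw [this, Multiset.map_coe]
  show ((List.map _ (List.range _) : List ℕ) : Multiset ℕ) = _
  congr 1
  apply List.map_congr_left
  intro j _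
  rw [← List.countP_eq_length_filter]
  rfl

lemma msum_ite (p : ℕ → Prop) [DecidablePred p] (M : Multiset ℕ) :
    (M.map (fun m => if p m then 1 else 0)).sum = M.countP p := by
  induction M using Multiset.induction_on with
  | empty => simp
  | cons a M ih =>
    rw [Multiset.map_cons, Multiset.sum_cons, Multiset.countP_cons, ih]
    split <;> omega

lemma msum_swap (i : ℕ) (F : ℕ → ℕ → ℕ) (M : Multiset ℕ) :
    (M.map (fun m => ∑ t ∈ Finset.range i, F t m)).sum
      = ∑ t ∈ Finset.range i, (M.map (F t)).sum := by
  induction M using Multiset.induction_on with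
  | empty => simp
  | cons a M ih => simp [ih, Finset.sum_add_distrib]

lemma min_eq_sum (m i : ℕ) : min m i = ∑ t ∈ Finset.range i, if t + 1 ≤ m then 1 else 0 := by
  rw [Finset.sum_boole]
  have : (Finset.range i).filter (fun t => t + 1 ≤ m) = Finset.range (min i m) := by
    ext t
    simp only [Finset.mem_filter, Finset.mem_range, Finset.mem_range]
    omega
  rw [this]
  simp [min_comm]


lemma all_le_head (l : List ℕ) (hsort : l.Pairwise (· ≥ ·)) : ∀ x ∈ l, x ≤ l.getD 0 0 := by
  cases l with
  | nil => simp
  | cons a as =>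
    intro x hx
    show x ≤ a
    rcases List.mem_cons.mp hx with rfl | hx
    · exact le_refl _
    · exact List.rel_of_pairwise_cons hsort hx

lemma sorted_sum_lemma (l : List ℕ) (hsort : l.Pairwise (· ≥ ·)) (k : ℕ)
    (hkmem : k ∈ ((conjList l : List ℕ) : Multiset ℕ)) :
    ((((conjList l : List ℕ) : Multiset ℕ)).filter (fun m => k < m)).sum + k
      = ((l : Multiset ℕ).map
          (fun m => min m (((((conjList l : List ℕ) : Multiset ℕ)).filter (fun m => k < m)).card + 1))).sum := by
  classical
  have hex : ∃ t, cge l t ≤ k := by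
    refine ⟨l.getD 0 0, ?_⟩
    have : cge l (l.getD 0 0) = 0 := by
      unfold cge
      rw [Multiset.countP_eq_zero]
      intro x hx
      have := all_le_head l hsort x (by exact_mod_cast hx)
      omega
    omega
  set i₀ := Nat.find hex with hi₀def
  have hfind : cge l i₀ ≤ k := Nat.find_spec hex
  -- the member k gives a witness index
  rw [conjList_coe] at hkmem
  obtain ⟨ts, htsmem, hts⟩ := Multiset.mem_map.mp hkmem
  have htsN : ts < l.getD 0 0 := by
    have := htsmem
    rw [Finset.mem_val, Finset.mem_range] at this
    exact this
  -- the filtered index set is an initial segment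
  have hfs : (Finset.range (l.getD 0 0)).filter (fun t => k < cge l t) = Finset.range i₀ := by
    ext t
    simp only [Finset.mem_filter, Finset.mem_range]
    constructor
    · rintro ⟨_, hkt⟩
      rw [hi₀def, Nat.lt_find_iff]
      intro m hm
      have := cge_antitone l hm
      omega
    · intro ht
      have hnp : ¬ (cge l t ≤ k) := Nat.find_min hex ht
      constructor
      · -- t < N since t < i₀ ≤ ts.succ... use i₀ ≤ ts (shown below), need: cge l ts = k so ¬(k < cge ts)
        have hi₀ts : i₀ ≤ ts := by
          by_contra hcon
          push_neg at hcon
          have := Nat.find_min hex hcon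
          omega
        omega
      · omega
  have hi₀ts : i₀ ≤ ts := by
    by_contra hcon
    push_neg at hcon
    have := Nat.find_min hex hcon
    omega
  have hi₀N : i₀ < l.getD 0 0 := lt_of_le_of_lt hi₀ts htsN
  have hcgei₀ : cge l i₀ = k := by
    have h1 : cge l ts ≤ cge l i₀ := cge_antitone l hi₀ts
    omega
  -- filtered multiset of conjugate parts > k
  have hfilt : (((conjList l : List ℕ) : Multiset ℕ)).filter (fun m => k < m)
      = Multiset.map (cge l) (Finset.range i₀).val := by
    rw [conjList_coe, Multiset.filter_map]
    congr 1
    have : Multiset.filter ((fun m => k < m) ∘ cge l) (Finset.range (l.getD 0 0)).val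
        = ((Finset.range (l.getD 0 0)).filter (fun t => k < cge l t)).val := rfl
    rw [this, hfs]
  have hcard : ((((conjList l : List ℕ) : Multiset ℕ)).filter (fun m => k < m)).card = i₀ := by
    rw [hfilt, Multiset.card_map]
    simp
  rw [hcard, hfilt]
  have hLHS : (Multiset.map (cge l) (Finset.range i₀).val).sum + k
      = ∑ t ∈ Finset.range (i₀ + 1), cge l t := by
    rw [Finset.sum_range_succ, hcgei₀]
    rfl
  rw [hLHS]
  -- RHS
  have hmin : ∀ m : ℕ, min m (i₀ + 1) = ∑ t ∈ Finset.range (i₀ + 1), if t + 1 ≤ m then 1 else 0 :=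
    fun m => min_eq_sum m (i₀ + 1)
  calc ∑ t ∈ Finset.range (i₀ + 1), cge l t
      = ∑ t ∈ Finset.range (i₀ + 1), ((l : Multiset ℕ).map (fun m => if t + 1 ≤ m then 1 else 0)).sum := by
        apply Finset.sum_congr rfl
        intro t _
        rw [msum_ite]
        rfl
    _ = ((l : Multiset ℕ).map (fun m => ∑ t ∈ Finset.range (i₀ + 1), if t + 1 ≤ m then 1 else 0)).sum := by
        rw [msum_swap (i₀ + 1) (fun t m => if t + 1 ≤ m then 1 else 0)]
    _ = ((l : Multiset ℕ).map (fun m => min m (i₀ + 1))).sum := by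
        congr 1
        apply Multiset.map_congr rfl
        intro m _
        rw [hmin m]

def mlt (w : Fin n → ℕ) (c : ℕ) : ℕ := (Finset.univ.filter (fun p => w p = c)).card

def vals (w : Fin n → ℕ) : Finset ℕ := Finset.image w Finset.univ

lemma multMultiset_eq (w : Fin n → ℕ) : multMultiset w = (vals w).val.map (mlt w) := rfl

lemma wact_swap (w : Fin n → ℕ) {p q : Fin n} (hw : w p = w q) :
    wact (Equiv.swap p q) w = w := by
  funext r
  simp only [wact, Function.comp_apply, Equiv.symm_swap]
  rcases eq_or_ne r p with rfl | hp
  · rw [Equiv.swap_apply_left]; exact hw.symm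
  rcases eq_or_ne r q with rfl | hq
  · rw [Equiv.swap_apply_right]; exact hw
  · rw [Equiv.swap_apply_of_ne_of_ne hp hq]

/-- Nesting lemma: if `c` is a letter of `w2` at least as frequent as the letter `c'`,
then every `w1`-letter meeting `c'` also meets `c`. -/
lemma nesting (w1 w2 : Fin n → ℕ)
    (inj : ∀ p q : Fin n, w1 p = w1 q → w2 p = w2 q → p = q)
    (l : List ℕ) (hsort : l.Pairwise (· ≥ ·))
    (hm1 : (l : Multiset ℕ) = multMultiset w1)
    (hμ : ((conjList l : List ℕ) : Multiset ℕ) = multMultiset w2)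
    {c c' : ℕ} (hc : c ∈ vals w2) (hcc' : mlt w2 c' ≤ mlt w2 c)
    {j : ℕ} {p₀ : Fin n} (h1 : w1 p₀ = j) (h2 : w2 p₀ = c') :
    ∃ p, w1 p = j ∧ w2 p = c := by
  classical
  rcases eq_or_ne c' c with rfl | hne
  · exact ⟨p₀, h1, h2⟩
  set k := mlt w2 c with hk
  set Cf : Finset ℕ := (vals w2).filter (fun x => k < mlt w2 x) with hCf
  set C : Finset ℕ := Cf ∪ {c} with hC
  have hcCf : c ∉ Cf := by simp [hCf]; exact fun _ => le_rfl
  have hdisj : Disjoint Cf {c} := Finset.disjoint_singleton_right.mpr hcCf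
  have hcardC : C.card = Cf.card + 1 := by
    rw [hC, Finset.card_union_of_disjoint hdisj, Finset.card_singleton]
  have hc'C : c' ∉ C := by
    rw [hC, Finset.mem_union, Finset.mem_singleton]
    rintro (h | h)
    · rw [hCf, Finset.mem_filter] at h
      omega
    · exact hne h
  set i := Cf.card + 1 with hi
  -- k is a member of the conjugate multiset
  have hkmem : k ∈ ((conjList l : List ℕ) : Multiset ℕ) := by
    rw [hμ, multMultiset_eq]
    exact Multiset.mem_map.mpr ⟨c, hc, rfl⟩
  -- filtered multiset equals map of mlt over Cf
  have hfilt : (((conjList l : List ℕ) : Multiset ℕ)).filter (fun m => k < m)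
      = Cf.val.map (mlt w2) := by
    rw [hμ, multMultiset_eq]
    show Multiset.filter (fun m => k < m) (Multiset.map (mlt w2) (vals w2).val) = _
    rw [Multiset.filter_map]
    rfl
  have hcardf : ((((conjList l : List ℕ) : Multiset ℕ)).filter (fun m => k < m)).card = Cf.card := by
    rw [hfilt, Multiset.card_map]
    rfl
  -- sum over C of multiplicities
  have hsumC : ∑ x ∈ C, mlt w2 x
      = ((((conjList l : List ℕ) : Multiset ℕ)).filter (fun m => k < m)).sum + k := by
    rw [hC, Finset.sum_union hdisj, Finset.sum_singleton, hfilt]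
    rfl
  -- RHS as a finset sum over vals w1
  have hsum1 : ((l : Multiset ℕ).map (fun m => min m i)).sum
      = ∑ j' ∈ vals w1, min (mlt w1 j') i := by
    rw [hm1, multMultiset_eq, Multiset.map_map]
    rfl
  have hmain : ∑ x ∈ C, mlt w2 x = ∑ j' ∈ vals w1, min (mlt w1 j') i := by
    rw [hsumC, ← hsum1]
    have := sorted_sum_lemma l hsort k hkmem
    rw [hcardf] at this
    exact this
  -- double counting
  set T : Finset (Fin n) := Finset.univ.filter (fun p => w2 p ∈ C) with hT
  have hTC : T.card = ∑ x ∈ C, mlt w2 x := by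
    rw [Finset.card_eq_sum_card_fiberwise (f := w2) (s := T) (t := C)
      (fun p hp => (Finset.mem_filter.mp hp).2)]
    apply Finset.sum_congr rfl
    intro b hb
    congr 1
    ext p
    simp only [hT, Finset.mem_filter, Finset.mem_univ, true_and]
    constructor
    · rintro ⟨_, h⟩; exact h
    · intro h; exact ⟨h ▸ hb, h⟩
  set m : ℕ → ℕ := fun j' => (T.filter (fun p => w1 p = j')).card with hm
  have hT1 : T.card = ∑ j' ∈ vals w1, m j' := by
    rw [Finset.card_eq_sum_card_fiberwise (f := w1) (t := vals w1)
      (fun p _ => Finset.mem_image.mpr ⟨p, Finset.mem_univ p, rfl⟩)]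
  have hbound : ∀ j' ∈ vals w1, m j' ≤ min (mlt w1 j') i := by
    intro j' _
    rw [le_min_iff]
    constructor
    · apply Finset.card_le_card
      intro p hp
      simp only [Finset.mem_filter] at hp ⊢
      exact ⟨Finset.mem_univ p, hp.2⟩
    · rw [← hcardC]
      apply Finset.card_le_card_of_injOn w2
      · intro p hp
        simp only [hT, Finset.mem_coe, Finset.mem_filter] at hp
        exact hp.1.2
      · intro p hp q hq hpq
        simp only [Finset.mem_coe, Finset.mem_filter] at hp hq
        exact inj p q (hp.2.trans hq.2.symm) hpq
  have heq : ∀ j' ∈ vals w1, m j' = min (mlt w1 j') i := by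
    by_contra hcon
    push_neg at hcon
    obtain ⟨j₀, hj₀, hj₀ne⟩ := hcon
    have hlt : m j₀ < min (mlt w1 j₀) i := lt_of_le_of_ne (hbound j₀ hj₀) hj₀ne
    have : ∑ j' ∈ vals w1, m j' < ∑ j' ∈ vals w1, min (mlt w1 j') i :=
      Finset.sum_lt_sum hbound ⟨j₀, hj₀, hlt⟩
    rw [← hT1, hTC, hmain] at this
    exact lt_irrefl _ this
  -- specialize to our row j
  have hjv : j ∈ vals w1 := Finset.mem_image.mpr ⟨p₀, Finset.mem_univ p₀, h1⟩
  have hmj : m j = min (mlt w1 j) i := heq j hjv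
  have hstrict : m j < mlt w1 j := by
    apply Finset.card_lt_card
    constructor
    · intro p hp
      simp only [Finset.mem_filter] at hp ⊢
      exact ⟨Finset.mem_univ p, hp.2⟩
    · intro hsub
      have hp₀ : p₀ ∈ Finset.univ.filter (fun p => w1 p = j) := by
        simp [h1]
      have := hsub hp₀
      simp only [hT, Finset.mem_filter] at this
      exact hc'C (h2 ▸ this.1.2)
  have hmji : m j = C.card := by
    rw [hcardC]
    omega
  -- surjectivity onto C
  set S := T.filter (fun p => w1 p = j) with hS
  have hinjS : Set.InjOn w2 S := by
    intro p hp q hq hpq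
    simp only [Finset.mem_coe, hS, Finset.mem_filter] at hp hq
    exact inj p q (hp.2.trans hq.2.symm) hpq
  have himg : Finset.image w2 S = C := by
    apply Finset.eq_of_subset_of_card_le
    · intro x hx
      obtain ⟨p, hp, rfl⟩ := Finset.mem_image.mp hx
      simp only [hS, hT, Finset.mem_filter] at hp
      exact hp.1.2
    · rw [Finset.card_image_of_injOn hinjS]
      exact le_of_eq hmji.symm
  have hcC : c ∈ Finset.image w2 S := himg ▸ (by
    rw [hC]
    exact Finset.mem_union_right _ (Finset.mem_singleton_self c))
  obtain ⟨p, hp, hpc⟩ := Finset.mem_image.mp hcC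
  simp only [hS, hT, Finset.mem_filter] at hp
  exact ⟨p, hp.2, hpc⟩

lemma key (w1 w2 : Fin n → ℕ)
    (inj : ∀ p q : Fin n, w1 p = w1 q → w2 p = w2 q → p = q)
    (l : List ℕ) (hsort : l.Pairwise (· ≥ ·))
    (hm1 : (l : Multiset ℕ) = multMultiset w1)
    (hμ : ((conjList l : List ℕ) : Multiset ℕ) = multMultiset w2)
    (hdist : ∀ a b, a ∈ vals w2 → b ∈ vals w2 → mlt w2 a = mlt w2 b → a = b)
    (τ : Equiv.Perm (Fin n)) (hτ1 : wact τ w1 = w1) (hτ2 : wact τ w2 ≠ w2)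
    (hcond : ∀ ρ : Equiv.Perm (Fin n), wact ρ w2 = w2 →
      ∃ ρ₂, wact ρ₂ w2 = w2 ∧ wact ρ w1 = wact (τ * ρ₂) w1) :
    False := by
  classical
  have hw1τ : ∀ p, w1 (τ p) = w1 p := by
    intro p
    have := congrFun hτ1 (τ p)
    simp only [wact, Function.comp_apply, Equiv.symm_apply_apply] at this
    exact this.symm
  set fib : ℕ → Finset (Fin n) := fun c => Finset.univ.filter (fun p => w2 p = c) with hfib
  set moved : Finset ℕ := (vals w2).filter (fun c => Finset.image τ (fib c) ≠ fib c) with hmoved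
  have hmv : moved.Nonempty := by
    rw [Finset.nonempty_iff_ne_empty]
    intro hemp
    apply hτ2
    have hall : ∀ c ∈ vals w2, Finset.image τ (fib c) = fib c := by
      intro c hc
      by_contra hne
      have : c ∈ moved := Finset.mem_filter.mpr ⟨hc, hne⟩
      rw [hemp] at this
      exact absurd this (Finset.notMem_empty c)
    have hptw : ∀ p, w2 (τ p) = w2 p := by
      intro p
      have hp : p ∈ fib (w2 p) := by simp [hfib]
      have : τ p ∈ fib (w2 p) := by
        rw [← hall (w2 p) (Finset.mem_image.mpr ⟨p, Finset.mem_univ p, rfl⟩)]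
        exact Finset.mem_image.mpr ⟨p, hp, rfl⟩
      simpa [hfib] using this
    funext q
    show w2 (τ.symm q) = w2 q
    conv_rhs => rw [← Equiv.apply_symm_apply τ q]
    rw [hptw]
  obtain ⟨c, hcm, hcmax⟩ := Finset.exists_max_image moved (mlt w2) hmv
  have hcv : c ∈ vals w2 := (Finset.mem_filter.mp hcm).1
  have hcmoved : Finset.image τ (fib c) ≠ fib c := (Finset.mem_filter.mp hcm).2
  set k := mlt w2 c with hk
  have hfibcard : ∀ d, (fib d).card = mlt w2 d := fun d => rfl
  set F : Finset (Fin n) := Finset.image τ (fib c) with hF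
  have hFcard : F.card = k := by
    rw [hF, Finset.card_image_of_injective _ τ.injective]
    rfl
  have hkpos : 0 < k := by
    obtain ⟨p, _, hp⟩ := Finset.mem_image.mp hcv
    have : p ∈ fib c := by simp [hfib, hp]
    have := Finset.card_pos.mpr ⟨p, this⟩
    rw [hfibcard] at this
    exact this
  have hsymmfib : ∀ x ∈ F, w2 (τ.symm x) = c := by
    intro x hx
    obtain ⟨q, hq, rfl⟩ := Finset.mem_image.mp hx
    rw [Equiv.symm_apply_apply]
    exact (Finset.mem_filter.mp hq).2
  -- (A) any letter on F other than c is strictly rarer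
  have hA : ∀ x ∈ F, w2 x ≠ c → mlt w2 (w2 x) < k := by
    intro x hx hne
    by_contra hge
    push_neg at hge
    have hxv : w2 x ∈ vals w2 := Finset.mem_image.mpr ⟨x, Finset.mem_univ x, rfl⟩
    by_cases hmvd : w2 x ∈ moved
    · have hle := hcmax _ hmvd
      have : mlt w2 (w2 x) = k := le_antisymm hle hge
      exact hne (hdist _ _ hxv hcv this)
    · have hinv : Finset.image τ (fib (w2 x)) = fib (w2 x) := by
        by_contra hcon
        exact hmvd (Finset.mem_filter.mpr ⟨hxv, hcon⟩)
      have hxfib : x ∈ fib (w2 x) := by simp [hfib]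
      rw [← hinv] at hxfib
      obtain ⟨q', hq', hq'x⟩ := Finset.mem_image.mp hxfib
      have : q' = τ.symm x := by rw [← hq'x, Equiv.symm_apply_apply]
      rw [this] at hq'
      have : w2 (τ.symm x) = w2 x := (Finset.mem_filter.mp hq').2
      rw [hsymmfib x hx] at this
      exact hne this.symm
  -- (C) some element of F has letter ≠ c
  have hCex : ∃ x ∈ F, w2 x ≠ c := by
    by_contra hcon
    push_neg at hcon
    apply hcmoved
    apply Finset.eq_of_subset_of_card_le
    · intro x hx
      simp only [hfib, Finset.mem_filter]
      exact ⟨Finset.mem_univ x, hcon x hx⟩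
    · rw [hfibcard, hFcard]
  obtain ⟨xs, hxsF, hxsne⟩ := hCex
  -- (D) minimizer
  have hFne : F.Nonempty := ⟨xs, hxsF⟩
  obtain ⟨x, hxF, hxmin⟩ := Finset.exists_min_image F (fun p => mlt w2 (w2 p)) hFne
  set m := w2 x with hmdef
  have hmlt : mlt w2 m < k := lt_of_le_of_lt (hxmin xs hxsF) (hA xs hxsF hxsne)
  have hmnec : m ≠ c := fun h => by rw [h] at hmlt; omega
  -- (E) y with different letter
  have hEy : ∃ y ∈ F, w2 y ≠ m := by
    by_contra hcon
    push_neg at hcon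
    have : F ⊆ fib m := by
      intro p hp
      simp only [hfib, Finset.mem_filter]
      exact ⟨Finset.mem_univ p, hcon p hp⟩
    have := Finset.card_le_card this
    rw [hFcard, hfibcard] at this
    omega
  obtain ⟨y, hyF, hyne⟩ := hEy
  have hxy : x ≠ y := fun h => hyne (by rw [hmdef, h])
  -- rows of F are distinct
  have hrows : w1 x ≠ w1 y := by
    intro h
    have hx' : w1 (τ.symm x) = w1 x := by
      conv_rhs => rw [← Equiv.apply_symm_apply τ x]
      rw [hw1τ]
    have hy' : w1 (τ.symm y) = w1 y := by
      conv_rhs => rw [← Equiv.apply_symm_apply τ y]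
      rw [hw1τ]
    have := inj (τ.symm x) (τ.symm y)
      (by rw [hx', hy', h]) (by rw [hsymmfib x hxF, hsymmfib y hyF])
    exact hxy (τ.symm.injective this)
  -- (G) nesting application
  have hyv : w2 y ∈ vals w2 := Finset.mem_image.mpr ⟨y, Finset.mem_univ y, rfl⟩
  obtain ⟨y', hy'1, hy'2⟩ := nesting w1 w2 inj l hsort hm1 hμ hyv (hxmin y hyF) rfl rfl
  -- hy'1 : w1 y' = w1 x, hy'2 : w2 y' = w2 y
  have hyy' : y ≠ y' := fun h => hrows (by rw [h, hy'1])
  have hxy' : x ≠ y' := fun h => hyne (by rw [← hy'2, ← h])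
  -- (I) the swap
  set ρ' := Equiv.swap y y' with hρ'
  have hρ'2 : wact ρ' w2 = w2 := wact_swap w2 (hy'2.symm ▸ rfl)
  obtain ⟨ρ₂, hρ₂2, hρeq⟩ := hcond ρ' hρ'2
  set u := wact ρ' w1 with hu
  set u₂ := wact ρ₂ w1 with hu₂
  have huτ : ∀ p, u₂ p = u (τ p) := by
    intro p
    have := congrFun hρeq (τ p)
    rw [← wact_wact] at this
    simp only [wact, Function.comp_apply, Equiv.symm_apply_apply] at this
    exact this.symm
  have huval : ∀ z, u z = w1 (Equiv.swap y y' z) := by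
    intro z
    simp [hu, wact, hρ']
  have hu₂inj : ∀ q ∈ fib c, ∀ q' ∈ fib c, u₂ q = u₂ q' → q = q' := by
    intro q hq q' hq' he
    have hwq : w2 (ρ₂.symm q) = w2 q := congrFun hρ₂2 q
    have hwq' : w2 (ρ₂.symm q') = w2 q' := congrFun hρ₂2 q'
    have h2q : w2 (ρ₂.symm q) = c := by rw [hwq]; exact (Finset.mem_filter.mp hq).2
    have h2q' : w2 (ρ₂.symm q') = c := by rw [hwq']; exact (Finset.mem_filter.mp hq').2
    have := inj (ρ₂.symm q) (ρ₂.symm q') he (h2q.trans h2q'.symm)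
    exact ρ₂.symm.injective this
  have hqx : τ.symm x ∈ fib c := by
    simp only [hfib, Finset.mem_filter]
    exact ⟨Finset.mem_univ _, hsymmfib x hxF⟩
  have hqy : τ.symm y ∈ fib c := by
    simp only [hfib, Finset.mem_filter]
    exact ⟨Finset.mem_univ _, hsymmfib y hyF⟩
  have hvx : u₂ (τ.symm x) = w1 x := by
    rw [huτ, Equiv.apply_symm_apply, huval, Equiv.swap_apply_of_ne_of_ne hxy hxy']
  have hvy : u₂ (τ.symm y) = w1 x := by
    rw [huτ, Equiv.apply_symm_apply, huval, Equiv.swap_apply_left, hy'1]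
  have := hu₂inj _ hqx _ hqy (hvx.trans hvy.symm)
  exact hxy (τ.symm.injective this)

/-- Construction of the column-swapping permutation. -/
lemma construct (w1 w2 : Fin n → ℕ)
    (inj : ∀ p q : Fin n, w1 p = w1 q → w2 p = w2 q → p = q)
    (l : List ℕ) (hsort : l.Pairwise (· ≥ ·))
    (hm1 : (l : Multiset ℕ) = multMultiset w1)
    (hμ : ((conjList l : List ℕ) : Multiset ℕ) = multMultiset w2)
    {a b : ℕ} (ha : a ∈ vals w2) (hb : b ∈ vals w2) (hab : a ≠ b)
    (he : mlt w2 a = mlt w2 b) :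
    ∃ τ : Equiv.Perm (Fin n), wact τ w1 = w1 ∧
      wact τ w2 = fun p => (Equiv.swap a b) (w2 p) := by
  classical
  have hexb : ∀ p : Fin n, w2 p = a → ∃ q, w1 q = w1 p ∧ w2 q = b :=
    fun p hp => nesting w1 w2 inj l hsort hm1 hμ hb (le_of_eq he) rfl hp
  have hexa : ∀ p : Fin n, w2 p = b → ∃ q, w1 q = w1 p ∧ w2 q = a :=
    fun p hp => nesting w1 w2 inj l hsort hm1 hμ ha (le_of_eq he.symm) rfl hp
  choose f hf1 hf2 using hexb
  choose g hg1 hg2 using hexa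
  set F : Fin n → Fin n := fun p =>
    if h : w2 p = a then f p h else if h' : w2 p = b then g p h' else p with hF
  have hFv : ∀ p, (w2 p = a → w2 (F p) = b ∧ w1 (F p) = w1 p) ∧
      (w2 p = b → w2 (F p) = a ∧ w1 (F p) = w1 p) ∧
      ((w2 p ≠ a ∧ w2 p ≠ b) → F p = p) := by
    intro p
    refine ⟨fun h => ?_, fun h => ?_, fun ⟨h1, h2⟩ => ?_⟩
    · simp only [hF, dif_pos h]
      exact ⟨hf2 p h, hf1 p h⟩
    · have hna : w2 p ≠ a := by rw [h]; exact fun hh => hab hh.symm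
      simp only [hF, dif_neg hna, dif_pos h]
      exact ⟨hg2 p h, hg1 p h⟩
    · simp only [hF, dif_neg h1, dif_neg h2]
  have hinv : Function.Involutive F := by
    intro p
    by_cases h : w2 p = a
    · obtain ⟨h2b, h1e⟩ := (hFv p).1 h
      obtain ⟨h2a, h1e'⟩ := (hFv (F p)).2.1 h2b
      exact inj _ _ (h1e'.trans h1e) (h2a.trans h.symm)
    by_cases h' : w2 p = b
    · obtain ⟨h2a, h1e⟩ := (hFv p).2.1 h'
      obtain ⟨h2b, h1e'⟩ := (hFv (F p)).1 h2a
      exact inj _ _ (h1e'.trans h1e) (h2b.trans h'.symm)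
    · rw [(hFv p).2.2 ⟨h, h'⟩, (hFv p).2.2 ⟨h, h'⟩]
  refine ⟨hinv.toPerm F, ?_, ?_⟩
  · funext p
    show w1 (F p) = w1 p
    by_cases h : w2 p = a
    · exact ((hFv p).1 h).2
    by_cases h' : w2 p = b
    · exact ((hFv p).2.1 h').2
    · rw [(hFv p).2.2 ⟨h, h'⟩]
  · funext p
    show w2 (F p) = Equiv.swap a b (w2 p)
    by_cases h : w2 p = a
    · rw [((hFv p).1 h).1, h, Equiv.swap_apply_left]
    by_cases h' : w2 p = b
    · rw [((hFv p).2.1 h').1, h', Equiv.swap_apply_right]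
    · rw [(hFv p).2.2 ⟨h, h'⟩, Equiv.swap_apply_of_ne_of_ne h h']

lemma dup_iff (l : List ℕ) (w2 : Fin n → ℕ)
    (hμsort : (conjList l).Pairwise (· ≥ ·))
    (hμ : ((conjList l : List ℕ) : Multiset ℕ) = multMultiset w2) :
    (∃ i : ℕ, 1 ≤ i ∧ i < l.getD 0 0 ∧
        (conjList l).getD (i - 1) 0 = (conjList l).getD i 0)
      ↔ ∃ x y, x ∈ vals w2 ∧ y ∈ vals w2 ∧ x ≠ y ∧ mlt w2 x = mlt w2 y := by
  classical
  have hlen : (conjList l).length = l.getD 0 0 := by simp [conjList]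
  have hnd : ¬ (conjList l).Nodup ↔
      ∃ x y, x ∈ vals w2 ∧ y ∈ vals w2 ∧ x ≠ y ∧ mlt w2 x = mlt w2 y := by
    rw [← Multiset.coe_nodup, hμ]
    have : multMultiset w2 = (vals w2).val.map (mlt w2) := rfl
    rw [this, Multiset.nodup_map_iff_inj_on (vals w2).nodup]
    constructor
    · intro h
      push_neg at h
      obtain ⟨x, hx, y, hy, hxy, hne⟩ := h
      exact ⟨x, y, hx, hy, hne, hxy⟩
    · rintro ⟨x, y, hx, hy, hne, hxy⟩ h
      exact hne (h x hx y hy hxy)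
  rw [← hnd]
  constructor
  · rintro ⟨i, hi1, hi2, hi3⟩ hnodup
    have hilen : i < (conjList l).length := hlen ▸ hi2
    have hilen' : i - 1 < (conjList l).length := lt_of_le_of_lt (Nat.sub_le i 1) hilen
    rw [List.getD_eq_getElem _ _ hilen', List.getD_eq_getElem _ _ hilen] at hi3
    have hinj := List.nodup_iff_injective_get.mp hnodup
    have := hinj (a₁ := ⟨i - 1, hilen'⟩) (a₂ := ⟨i, hilen⟩) (by
      simp only [List.get_eq_getElem]
      exact hi3)
    have : i - 1 = i := congrArg Fin.val this
    omega
  · intro hnodup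
    by_contra hcon
    push_neg at hcon
    apply hnodup
    rw [List.nodup_iff_injective_get]
    intro p q hpq
    by_contra hne
    -- wlog p < q
    have key : ∀ p q : Fin (conjList l).length, p < q → (conjList l).get p = (conjList l).get q → False := by
      intro p q hlt heq
      have hq : (q : ℕ) < (conjList l).length := q.2
      have hadj : (conjList l).getD ((p : ℕ) + 1 - 1) 0 = (conjList l).getD ((p : ℕ) + 1) 0 := by
        have hp1 : (p : ℕ) + 1 < (conjList l).length := lt_of_le_of_lt hlt hq
        rw [Nat.add_sub_cancel, List.getD_eq_getElem _ _ (lt_trans (Nat.lt_succ_self _) hp1),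
          List.getD_eq_getElem _ _ hp1]
        have pair := List.pairwise_iff_get.mp hμsort
        have h1 : (conjList l).get p ≥ (conjList l).get ⟨(p : ℕ) + 1, hp1⟩ := by
          apply pair
          exact Nat.lt_succ_self _
        have h2 : (conjList l).get ⟨(p : ℕ) + 1, hp1⟩ ≥ (conjList l).get q := by
          rcases eq_or_lt_of_le (Nat.succ_le_of_lt hlt) with heq' | hlt'
          · have : (⟨(p : ℕ) + 1, hp1⟩ : Fin (conjList l).length) = q := Fin.ext heq'
            rw [this]
          · exact pair _ _ hlt'
        have : (conjList l).get p = (conjList l).get ⟨(p : ℕ) + 1, hp1⟩ := by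
          rw [heq] at h1 ⊢
          omega
        simp only [List.get_eq_getElem] at this ⊢
        rw [← this]
      exact hcon ((p : ℕ) + 1) (Nat.le_add_left 1 _) (hlen ▸ lt_of_le_of_lt hlt hq) hadj
    rcases lt_trichotomy p q with h | h | h
    · exact key p q h hpq
    · exact hne h
    · exact key q p h hpq.symm

end SpechtAux

/-- Every column of the Specht matrix is nonzero, and two distinct
columns are linearly dependent (a two-element circuit of the Specht matroid `M(λ)`)
if and only if the diagram of `λ` has two columns of the same size, i.e.
`μ_i = μ_{i+1}` for some `1 ≤ i < λ_1`, where `μ = λ*`. -/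
theorem specht_stmt_7 {n : ℕ} (l : List ℕ) (hl : SortedPartList l) (hsum : l.sum = n)
    (w1 w2 : Fin n → ℕ) (hc : Complementary w1 w2) (hcorr : CorrespondsTo w1 w2 l) :
    (∀ r2 : Rearr w2, spechtCol w1 w2 r2 ≠ 0) ∧
    ((∃ r r' : Rearr w2, r ≠ r' ∧
        ¬ LinearIndependent ℂ ![spechtCol w1 w2 r, spechtCol w1 w2 r']) ↔
      ∃ i : ℕ, 1 ≤ i ∧ i < l.getD 0 0 ∧
        (conjList l).getD (i - 1) 0 = (conjList l).getD i 0) := by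
  classical
  obtain ⟨-, hfree⟩ := hc
  obtain ⟨⟨⟨hsort1, hpos1⟩, hm1⟩, ⟨⟨hsortm, hposm⟩, hmm⟩⟩ := hcorr
  have inj := SpechtAux.pair_inj hfree
  have hcolne : ∀ r2 : Rearr w2, spechtCol w1 w2 r2 ≠ 0 := by
    intro r2 h0
    obtain ⟨σ, hσ⟩ := r2.2
    have h := congrFun h0 (⟨wact σ w1, σ, rfl⟩ : Rearr w1)
    simp only [spechtCol, Pi.zero_apply] at h
    rw [← hσ, SpechtAux.young_val hfree σ] at h
    exact Int.cast_ne_zero.mpr (Units.ne_zero _) h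
  refine ⟨hcolne, ?_, ?_⟩
  · -- forward direction
    rintro ⟨r, r', hne, hdep⟩
    rw [linearIndependent_fin2] at hdep
    push_neg at hdep
    simp only [Matrix.cons_val_one, Matrix.head_cons, Matrix.cons_val_zero] at hdep
    obtain ⟨aa, haa⟩ := hdep (hcolne r')
    have haane : aa ≠ 0 := by
      intro h0
      apply hcolne r
      rw [← haa, h0, zero_smul]
    have hsupp : ∀ u : Fin n → ℕ,
        (∃ σ, wact σ w1 = u ∧ wact σ w2 = r.1) ↔
          (∃ σ, wact σ w1 = u ∧ wact σ w2 = r'.1) := by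
      intro u
      constructor
      · rintro ⟨σ, h1, h2⟩
        have hval := congrFun haa (⟨u, σ, h1⟩ : Rearr w1)
        simp only [spechtCol, Pi.smul_apply, smul_eq_mul] at hval
        have hne0 : (youngChar w1 w2 u r.1 : ℂ) ≠ 0 :=
          Int.cast_ne_zero.mpr ((SpechtAux.young_ne_zero hfree u r.1).mpr ⟨σ, h1, h2⟩)
        have h0 : (youngChar w1 w2 u r'.1 : ℂ) ≠ 0 := by
          intro h0
          apply hne0
          rw [← hval, h0, mul_zero]
        exact (SpechtAux.young_ne_zero hfree u r'.1).mp (Int.cast_ne_zero.mp h0)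
      · rintro ⟨σ, h1, h2⟩
        have hval := congrFun haa (⟨u, σ, h1⟩ : Rearr w1)
        simp only [spechtCol, Pi.smul_apply, smul_eq_mul] at hval
        have hne0 : (youngChar w1 w2 u r'.1 : ℂ) ≠ 0 :=
          Int.cast_ne_zero.mpr ((SpechtAux.young_ne_zero hfree u r'.1).mpr ⟨σ, h1, h2⟩)
        have h0 : (youngChar w1 w2 u r.1 : ℂ) ≠ 0 := by
          rw [← hval]
          exact mul_ne_zero haane hne0
        exact (SpechtAux.young_ne_zero hfree u r.1).mp (Int.cast_ne_zero.mp h0)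
    obtain ⟨σ₀, hσ₀⟩ := r.2
    obtain ⟨σ₂, hσ₂1, hσ₂2⟩ := (hsupp (wact σ₀ w1)).mp ⟨σ₀, rfl, hσ₀⟩
    set τ := σ₀⁻¹ * σ₂ with hτdef
    have hτ1 : wact τ w1 = w1 := by
      rw [hτdef, ← wact_wact, hσ₂1, wact_wact, inv_mul_cancel, SpechtAux.wact_one]
    have hτ2 : wact τ w2 ≠ w2 := by
      intro h
      apply hne
      apply Subtype.ext
      have : wact σ₀ (wact τ w2) = wact σ₀ w2 := by rw [h]
      rw [wact_wact, hτdef, mul_inv_cancel_left, hσ₂2, hσ₀] at this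
      exact this.symm
    have hcond : ∀ ρ : Equiv.Perm (Fin n), wact ρ w2 = w2 →
        ∃ ρ₂, wact ρ₂ w2 = w2 ∧ wact ρ w1 = wact (τ * ρ₂) w1 := by
      intro ρ hρ
      obtain ⟨σ', h'1, h'2⟩ := (hsupp (wact (σ₀ * ρ) w1)).mp
        ⟨σ₀ * ρ, rfl, by rw [← wact_wact, hρ, hσ₀]⟩
      refine ⟨σ₂⁻¹ * σ', ?_, ?_⟩
      · rw [← wact_wact, h'2, ← hσ₂2, wact_wact, inv_mul_cancel, SpechtAux.wact_one]
      · have hgrp : τ * (σ₂⁻¹ * σ') = σ₀⁻¹ * σ' := by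
          rw [hτdef]
          group
        rw [hgrp, ← wact_wact, h'1, wact_wact, inv_mul_cancel_left]
    by_contra hgoal
    refine SpechtAux.key w1 w2 inj l hsort1 hm1 hmm ?_ τ hτ1 hτ2 hcond
    intro a b hav hbv he
    by_contra hab
    exact hgoal ((SpechtAux.dup_iff l w2 hsortm hmm).mpr ⟨a, b, hav, hbv, hab, he⟩)
  · -- backward direction
    rintro ⟨i, hi1, hi2, hi3⟩
    obtain ⟨a, b, hav, hbv, hab, he⟩ :=
      (SpechtAux.dup_iff l w2 hsortm hmm).mp ⟨i, hi1, hi2, hi3⟩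
    obtain ⟨τ, hτ1, hτ2⟩ := SpechtAux.construct w1 w2 inj l hsort1 hm1 hmm hav hbv hab he
    set s := Equiv.swap a b with hs
    set r : Rearr w2 := ⟨w2, 1, SpechtAux.wact_one w2⟩ with hr
    set r' : Rearr w2 := ⟨fun p => s (w2 p), τ, hτ2⟩ with hr'
    have hrne : r ≠ r' := by
      intro h
      obtain ⟨p₀, -, hp₀⟩ := Finset.mem_image.mp hav
      have h2 := congrFun (congrArg Subtype.val h) p₀
      rw [hr, hr'] at h2
      simp only at h2
      rw [hp₀, hs, Equiv.swap_apply_left] at h2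
      exact hab h2
    have hcols : spechtCol w1 w2 r' = ((Equiv.Perm.sign τ : ℤ) : ℂ) • spechtCol w1 w2 r := by
      funext r1
      simp only [spechtCol, Pi.smul_apply, smul_eq_mul]
      rw [SpechtAux.young_swap τ s hτ1 hτ2 r1.1]
      push_cast
      ring
    refine ⟨r, r', hrne, ?_⟩
    intro hLI
    rw [linearIndependent_fin2] at hLI
    obtain ⟨h1, h2⟩ := hLI
    simp only [Matrix.cons_val_one, Matrix.head_cons, Matrix.cons_val_zero] at h1 h2
    apply h2 (((Equiv.Perm.sign τ : ℤ) : ℂ))⁻¹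
    rw [hcols, smul_smul, inv_mul_cancel₀, one_smul]
    exact Int.cast_ne_zero.mpr (Units.ne_zero _)
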